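/- Let Δ_n ⊂ ℝ^{d_n} be finite-dimensional probability simplices and, for each β ∈ ℝ and j ≥ 1, let S(β)^{(j)} : Δ_j → Δ_{j-1} be induced by a left stochastic matrix, and let S^{(j)} be left stochastic matrices with Σ_{j=1}^∞ ‖S(β)^{(j)} − S^{(j)}‖_1 → 0 as β → ∞ (operator norm for the ℓ¹-norm). Then for every ψ in the inverse limit lim_j (Δ_j, S^{(j)}) there exist φ^β ∈ lim_j (Δ_j, S(β)^{(j)}) for each β such that φ^β → ψ in the product topology as β → ∞. -/

import Mathlib

open scoped BigOperators

/-- The operator norm induced by the `ℓ¹`-norms: the largest `ℓ¹`-norm of a column. -/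
noncomputable def l1opNorm {m n : Type} [Fintype m] [Fintype n] (M : Matrix m n ℝ) : ℝ :=
  ⨆ j : n, ∑ i : m, |M i j|

lemma l1opNorm_nonneg {m n : Type} [Fintype m] [Fintype n] [Nonempty n] (M : Matrix m n ℝ) :
    0 ≤ l1opNorm M :=
  Real.iSup_nonneg' ⟨Classical.arbitrary n, Finset.sum_nonneg fun _ _ => abs_nonneg _⟩

lemma l1_sum_mulVec {m n : Type} [Fintype m] [Fintype n] (M : Matrix m n ℝ) (z : n → ℝ) :
    ∑ v, |M.mulVec z v| ≤ ∑ w, |z w| * ∑ v, |M v w| := by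
  calc ∑ v, |M.mulVec z v| ≤ ∑ v, ∑ w, |M v w * z w| := by
        apply Finset.sum_le_sum
        intro v _
        exact Finset.abs_sum_le_sum_abs _ _
    _ = ∑ w, |z w| * ∑ v, |M v w| := by
        rw [Finset.sum_comm]
        congr 1; ext w
        rw [Finset.mul_sum]
        congr 1; ext v
        rw [abs_mul]; ring

lemma l1_mulVec_stoch {m n : Type} [Fintype m] [Fintype n] (M : Matrix m n ℝ)
    (hM : ∀ v w, 0 ≤ M v w) (hcol : ∀ w, ∑ v, M v w = 1) (z : n → ℝ) :
    ∑ v, |M.mulVec z v| ≤ ∑ w, |z w| := by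
  refine (l1_sum_mulVec M z).trans ?_
  apply le_of_eq
  congr 1; ext w
  have : ∑ v, |M v w| = 1 := by
    rw [← hcol w]; congr 1; ext v; exact abs_of_nonneg (hM v w)
  rw [this, mul_one]

lemma l1_mulVec_op {m n : Type} [Fintype m] [Fintype n] [Nonempty n] (M : Matrix m n ℝ) (z : n → ℝ) :
    ∑ v, |M.mulVec z v| ≤ l1opNorm M * ∑ w, |z w| := by
  refine (l1_sum_mulVec M z).trans ?_
  rw [mul_comm, Finset.sum_mul]
  apply Finset.sum_le_sum
  intro w _
  have h : ∑ v, |M v w| ≤ l1opNorm M :=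
    le_ciSup (f := fun w => ∑ v, |M v w|) (Set.Finite.bddAbove (Set.finite_range _)) w
  exact mul_le_mul_of_nonneg_left h (abs_nonneg _)

/-- Iterated application: `approxSeq S ψ n j = S j ⋯ S (j+n-1) (ψ (j+n))`. -/
noncomputable def approxSeq (d : ℕ → Type) [∀ n, Fintype (d n)]
    (S : ∀ j : ℕ, Matrix (d j) (d (j + 1)) ℝ) (ψ : ∀ j, d j → ℝ) : ℕ → ∀ j, d j → ℝ
  | 0 => ψ
  | n + 1 => fun j => (S j).mulVec (approxSeq d S ψ n (j + 1))

lemma mulVec_mem_stdSimplex {m n : Type} [Fintype m] [Fintype n] (M : Matrix m n ℝ)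
    (hM : ∀ v w, 0 ≤ M v w) (hcol : ∀ w, ∑ v, M v w = 1)
    {z : n → ℝ} (hz : z ∈ stdSimplex ℝ n) : M.mulVec z ∈ stdSimplex ℝ m := by
  constructor
  · intro v
    exact Finset.sum_nonneg fun w _ => mul_nonneg (hM v w) (hz.1 w)
  · have : ∑ v, M.mulVec z v = ∑ w, z w * ∑ v, M v w := by
      simp only [Matrix.mulVec, dotProduct]
      rw [Finset.sum_comm]
      congr 1; ext w
      rw [Finset.mul_sum]
      congr 1; ext v; ring
    rw [this]
    simp only [hcol, mul_one]
    exact hz.2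

theorem stmt_9 (d : ℕ → Type) [∀ n, Fintype (d n)] [∀ n, Nonempty (d n)]
    (S : ℝ → ∀ j : ℕ, Matrix (d j) (d (j + 1)) ℝ)
    (T : ∀ j : ℕ, Matrix (d j) (d (j + 1)) ℝ)
    (hS : ∀ β j, (∀ v w, 0 ≤ S β j v w) ∧ ∀ w, ∑ v, S β j v w = 1)
    (hT : ∀ j, (∀ v w, 0 ≤ T j v w) ∧ ∀ w, ∑ v, T j v w = 1)
    (hsummable : ∀ β, Summable fun j => l1opNorm (S β j - T j))
    (hconv : Filter.Tendsto (fun β => ∑' j, l1opNorm (S β j - T j)) Filter.atTop (nhds 0))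
    (ψ : ∀ j, d j → ℝ)
    (hψs : ∀ j, ψ j ∈ stdSimplex ℝ (d j))
    (hψ : ∀ j, ψ j = (T j).mulVec (ψ (j + 1))) :
    ∃ φ : ℝ → ∀ j, d j → ℝ,
      (∀ β j, φ β j ∈ stdSimplex ℝ (d j)) ∧
      (∀ β j, φ β j = (S β j).mulVec (φ β (j + 1))) ∧
      ∀ j, Filter.Tendsto (fun β => φ β j) Filter.atTop (nhds (ψ j)) := by
  classical
  set Ψ : ℝ → ℕ → ∀ j, d j → ℝ := fun β => approxSeq d (S β) ψ with hΨdef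
  set ε : ℝ → ℕ → ℝ := fun β i => l1opNorm (S β i - T i) with hεdef
  have hεnn : ∀ β i, 0 ≤ ε β i := fun β i => l1opNorm_nonneg _
  set E : ℝ → ℝ := fun β => ∑' i, ε β i with hEdef
  -- membership in simplices
  have hsimp : ∀ β n j, Ψ β n j ∈ stdSimplex ℝ (d j) := by
    intro β n
    induction n with
    | zero => intro j; exact hψs j
    | succ n ih =>
      intro j
      exact mulVec_mem_stdSimplex _ (hS β j).1 (hS β j).2 (ih (j + 1))
  have hψabs : ∀ j, ∑ w, |ψ j w| = 1 := by
    intro j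
    rw [← (hψs j).2]
    congr 1; ext w; exact abs_of_nonneg ((hψs j).1 w)
  -- one-step estimate
  have hstep : ∀ β n j, ∑ v, |Ψ β (n + 1) j v - Ψ β n j v| ≤ ε β (j + n) := by
    intro β n
    induction n with
    | zero =>
      intro j
      have h1 : Ψ β 1 j = (S β j).mulVec (ψ (j + 1)) := rfl
      have h0 : Ψ β 0 j = (T j).mulVec (ψ (j + 1)) := hψ j
      have hd : ∀ v, Ψ β 1 j v - Ψ β 0 j v = (S β j - T j).mulVec (ψ (j + 1)) v := by
        intro v
        rw [h1, h0, Matrix.sub_mulVec]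
        simp [Pi.sub_apply]
      calc ∑ v, |Ψ β 1 j v - Ψ β 0 j v| = ∑ v, |(S β j - T j).mulVec (ψ (j + 1)) v| := by
            simp only [hd]
        _ ≤ l1opNorm (S β j - T j) * ∑ w, |ψ (j + 1) w| := l1_mulVec_op _ _
        _ = ε β (j + 0) := by rw [hψabs]; simp [hεdef]
    | succ n ih =>
      intro j
      have hd : ∀ v, Ψ β (n + 2) j v - Ψ β (n + 1) j v =
          (S β j).mulVec (fun w => Ψ β (n + 1) (j + 1) w - Ψ β n (j + 1) w) v := by
        intro v
        show (S β j).mulVec (Ψ β (n + 1) (j + 1)) v - (S β j).mulVec (Ψ β n (j + 1)) v = _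
        rw [show (fun w => Ψ β (n + 1) (j + 1) w - Ψ β n (j + 1) w)
            = Ψ β (n + 1) (j + 1) - Ψ β n (j + 1) from rfl, Matrix.mulVec_sub]
        simp [Pi.sub_apply]
      calc ∑ v, |Ψ β (n + 2) j v - Ψ β (n + 1) j v|
          = ∑ v, |(S β j).mulVec (fun w => Ψ β (n + 1) (j + 1) w - Ψ β n (j + 1) w) v| := by
            simp only [hd]
        _ ≤ ∑ w, |Ψ β (n + 1) (j + 1) w - Ψ β n (j + 1) w| :=
            l1_mulVec_stoch _ (hS β j).1 (hS β j).2 _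
        _ ≤ ε β ((j + 1) + n) := ih (j + 1)
        _ = ε β (j + (n + 1)) := by congr 1; omega
  -- distance to ψ estimate
  have hdist : ∀ β n j, ∑ v, |Ψ β n j v - ψ j v| ≤ ∑ i ∈ Finset.range n, ε β (j + i) := by
    intro β n
    induction n with
    | zero =>
      intro j
      have : ∀ v : d j, Ψ β 0 j v - ψ j v = 0 := fun v => sub_self _
      simp [this]
    | succ n ih =>
      intro j
      have hd : ∀ v, Ψ β (n + 1) j v - ψ j v =
          (S β j).mulVec (fun w => Ψ β n (j + 1) w - ψ (j + 1) w) v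
            + (S β j - T j).mulVec (ψ (j + 1)) v := by
        intro v
        show (S β j).mulVec (Ψ β n (j + 1)) v - ψ j v = _
        rw [hψ j]
        rw [show (fun w => Ψ β n (j + 1) w - ψ (j + 1) w)
            = Ψ β n (j + 1) - ψ (j + 1) from rfl, Matrix.mulVec_sub, Matrix.sub_mulVec]
        simp only [Pi.sub_apply]
        ring
      calc ∑ v, |Ψ β (n + 1) j v - ψ j v|
          ≤ ∑ v, (|(S β j).mulVec (fun w => Ψ β n (j + 1) w - ψ (j + 1) w) v|
              + |(S β j - T j).mulVec (ψ (j + 1)) v|) := by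
            apply Finset.sum_le_sum
            intro v _
            rw [hd v]
            exact abs_add_le _ _
        _ = ∑ v, |(S β j).mulVec (fun w => Ψ β n (j + 1) w - ψ (j + 1) w) v|
              + ∑ v, |(S β j - T j).mulVec (ψ (j + 1)) v| := Finset.sum_add_distrib
        _ ≤ (∑ w, |Ψ β n (j + 1) w - ψ (j + 1) w|) + ε β j := by
            apply add_le_add
            · exact l1_mulVec_stoch _ (hS β j).1 (hS β j).2 _
            · have := l1_mulVec_op (S β j - T j) (ψ (j + 1))
              rwa [hψabs, mul_one] at this
        _ ≤ (∑ i ∈ Finset.range n, ε β ((j + 1) + i)) + ε β j := by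
            exact add_le_add (ih (j + 1)) le_rfl
        _ = ∑ i ∈ Finset.range (n + 1), ε β (j + i) := by
            rw [Finset.sum_range_succ']
            simp only [Nat.add_zero]
            congr 1
            apply Finset.sum_congr rfl
            intro i _
            congr 1; omega
  have hboundE : ∀ β n j, ∑ v, |Ψ β n j v - ψ j v| ≤ E β := by
    intro β n j
    refine (hdist β n j).trans ?_
    have hinj : Function.Injective (fun i => j + i) := add_right_injective j
    calc ∑ i ∈ Finset.range n, ε β (j + i)
        = ∑ k ∈ (Finset.range n).image (fun i => j + i), ε β k := by
          rw [Finset.sum_image (fun a _ b _ h => hinj h)]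
      _ ≤ E β := (hsummable β).sum_le_tsum _ (fun i _ => hεnn β i)
  -- Cauchy and limits, coordinatewise
  have hcauchy : ∀ β j (v : d j), ∃ L, Filter.Tendsto (fun n => Ψ β n j v) Filter.atTop (nhds L) := by
    intro β j v
    have hc : CauchySeq (fun n => Ψ β n j v) := by
      apply cauchySeq_of_summable_dist
      apply Summable.of_nonneg_of_le (fun n => dist_nonneg) (fun n => ?_)
        ((hsummable β).comp_injective (add_right_injective j))
      calc dist (Ψ β n j v) (Ψ β (n + 1) j v) = |Ψ β (n + 1) j v - Ψ β n j v| := by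
            rw [Real.dist_eq, abs_sub_comm]
        _ ≤ ∑ u, |Ψ β (n + 1) j u - Ψ β n j u| :=
            Finset.single_le_sum (f := fun u => |Ψ β (n + 1) j u - Ψ β n j u|)
              (fun u _ => abs_nonneg _) (Finset.mem_univ v)
        _ ≤ ε β (j + n) := hstep β n j
    exact cauchySeq_tendsto_of_complete hc
  choose φ hφ using hcauchy
  have hΨlim : ∀ β j, Filter.Tendsto (fun n => Ψ β n j) Filter.atTop (nhds (φ β j)) := by
    intro β j
    exact tendsto_pi_nhds.mpr (hφ β j)
  refine ⟨φ, ?_, ?_, ?_⟩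
  · intro β j
    exact (isClosed_stdSimplex ℝ (d j)).mem_of_tendsto (hΨlim β j)
      (Filter.Eventually.of_forall (fun n => hsimp β n j))
  · intro β j
    have h1 : Filter.Tendsto (fun n => Ψ β (n + 1) j) Filter.atTop (nhds (φ β j)) :=
      (hΨlim β j).comp (Filter.tendsto_add_atTop_nat 1)
    have hcont : Continuous fun z : d (j + 1) → ℝ => (S β j).mulVec z :=
      LinearMap.continuous_of_finiteDimensional ((S β j).mulVecLin)
    have h2 : Filter.Tendsto (fun n => (S β j).mulVec (Ψ β n (j + 1))) Filter.atTop
        (nhds ((S β j).mulVec (φ β (j + 1)))) :=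
      (hcont.tendsto _).comp (hΨlim β (j + 1))
    have h3 : (fun n => Ψ β (n + 1) j) = fun n => (S β j).mulVec (Ψ β n (j + 1)) := rfl
    rw [h3] at h1
    exact tendsto_nhds_unique h1 h2
  · intro j
    rw [tendsto_pi_nhds]
    intro v
    have hbd : ∀ β, |φ β j v - ψ j v| ≤ E β := by
      intro β
      have hlim : Filter.Tendsto (fun n => |Ψ β n j v - ψ j v|) Filter.atTop
          (nhds |φ β j v - ψ j v|) :=
        ((continuous_abs.tendsto _).comp ((hφ β j v).sub_const _))
      apply le_of_tendsto hlim
      apply Filter.Eventually.of_forall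
      intro n
      calc |Ψ β n j v - ψ j v| ≤ ∑ u, |Ψ β n j u - ψ j u| :=
            Finset.single_le_sum (f := fun u => |Ψ β n j u - ψ j u|)
              (fun u _ => abs_nonneg _) (Finset.mem_univ v)
        _ ≤ E β := hboundE β n j
    have h0 : Filter.Tendsto (fun β => φ β j v - ψ j v) Filter.atTop (nhds 0) := by
      apply squeeze_zero_norm (fun β => ?_) hconv
      simpa [Real.norm_eq_abs] using hbd β
    have := h0.add_const (ψ j v)
    simpa using this
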